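/- (Upper-bound variant of the comparison lemma.) Let M ⊆ ℝ^d, let Z : ℝ^d → ℝ^d be C^(p−1) and Γ : ℝ^d → ℝ be C^p, and let χ₀, …, χ_{p−1} ∈ ℝ with χ_i ≥ 0 for i = 0, …, p−2 satisfy the reversed differential inequality L_Z^p Γ(z) ≥ Σ_{i=0}^{p−1} χ_i · L_Z^i Γ(z) for every z ∈ M. Let 𝓏(·, z₀) be a solution of ż = Z(z) with 𝓏(0, z₀) = z₀ remaining in M for all t ∈ [0, T], and let y : [0, T] → ℝ^p solve ẏ_i = y_{i+1} (i = 1, …, p−1), ẏ_p = Σ_{i=0}^{p−1} χ_i · y_{i+1}, with y(0) = (Γ(z₀), L_Z Γ(z₀), …, L_Z^(p−1) Γ(z₀)). Then Γ(𝓏(t, z₀)) ≥ y₁(t) for all t ∈ [0, T]. -/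

import Mathlib

/-- The Lie derivative of `g` along the vector field `Z`: `L_Z g (z) = Dg(z) (Z z)`. -/
noncomputable def lieDeriv {E : Type*} [NormedAddCommGroup E] [NormedSpace ℝ E]
    (Z : E → E) (g : E → ℝ) : E → ℝ :=
  fun z => fderiv ℝ g z (Z z)

/-- Iterated Lie derivatives: `L_Z^0 g = g`, `L_Z^(k+1) g = L_Z (L_Z^k g)`. -/
noncomputable def lieDerivIter {E : Type*} [NormedAddCommGroup E] [NormedSpace ℝ E]
    (Z : E → E) (g : E → ℝ) : ℕ → E → ℝ
  | 0 => g
  | k + 1 => lieDeriv Z (lieDerivIter Z g k)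

lemma lieDerivIter_contDiff {E : Type*} [NormedAddCommGroup E] [NormedSpace ℝ E]
    {Z : E → E} {Γ : E → ℝ} {p : ℕ} (hZ : ContDiff ℝ ((p - 1 : ℕ) : ℕ∞) Z)
    (hΓ : ContDiff ℝ ((p : ℕ) : ℕ∞) Γ) :
    ∀ k, k ≤ p → ContDiff ℝ ((p - k : ℕ) : ℕ∞) (lieDerivIter Z Γ k) := by
  intro k
  induction k with
  | zero => intro _; simpa [lieDerivIter] using hΓ
  | succ k ih =>
    intro hk
    have hk' : k ≤ p := by omega
    have IH := ih hk'
    have hd : ContDiff ℝ ((p - (k+1) : ℕ) : ℕ∞) (fderiv ℝ (lieDerivIter Z Γ k)) :=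
      IH.fderiv_right (by exact_mod_cast (by omega : p - (k+1) + 1 ≤ p - k))
    have hZ' : ContDiff ℝ ((p - (k+1) : ℕ) : ℕ∞) Z :=
      hZ.of_le (by exact_mod_cast (by omega : p - (k+1) ≤ p - 1))
    show ContDiff ℝ ((p - (k+1) : ℕ) : ℕ∞) (fun z => fderiv ℝ (lieDerivIter Z Γ k) z (Z z))
    exact hd.clm_apply hZ'

/-- Upper-bound variant of the comparison lemma: under the reversed differential
inequality `L_Z^p Γ ≥ Σ_i χ_i L_Z^i Γ` on `M` (with `χ_i ≥ 0` for `i ≤ p - 2`), the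
first component of the solution of the companion linear system lower-bounds `Γ` along
the solution of `ż = Z z`: `Γ (𝓏 t) ≥ y t 0` for `t ∈ [0, T]`. -/
theorem comparison_lemma_triggering_upper {d p : ℕ} (hp : 0 < p)
    (M : Set (Fin d → ℝ)) (Z : (Fin d → ℝ) → (Fin d → ℝ)) (Γ : (Fin d → ℝ) → ℝ)
    (hZ : ContDiff ℝ ((p - 1 : ℕ) : ℕ∞) Z) (hΓ : ContDiff ℝ ((p : ℕ) : ℕ∞) Γ)
    (χ : Fin p → ℝ) (hχ : ∀ i : Fin p, (i : ℕ) + 1 < p → 0 ≤ χ i)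
    (hineq : ∀ z ∈ M, lieDerivIter Z Γ p z ≥ ∑ i : Fin p, χ i * lieDerivIter Z Γ i z)
    (z₀ : Fin d → ℝ) (T : ℝ) (hT : 0 ≤ T)
    (𝓏 : ℝ → (Fin d → ℝ)) (h𝓏0 : 𝓏 0 = z₀)
    (h𝓏deriv : ∀ t ∈ Set.Icc (0 : ℝ) T, HasDerivAt 𝓏 (Z (𝓏 t)) t)
    (h𝓏M : ∀ t ∈ Set.Icc (0 : ℝ) T, 𝓏 t ∈ M)
    (y : ℝ → Fin p → ℝ)
    (hy0 : ∀ i : Fin p, y 0 i = lieDerivIter Z Γ i z₀)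
    (hyderiv : ∀ t ∈ Set.Icc (0 : ℝ) T, ∀ i : Fin p,
      HasDerivAt (fun s => y s i)
        (if h : (i : ℕ) + 1 < p then y t ⟨(i : ℕ) + 1, h⟩
         else ∑ j : Fin p, χ j * y t j) t) :
    ∀ t ∈ Set.Icc (0 : ℝ) T, Γ (𝓏 t) ≥ y t ⟨0, hp⟩ := by
  have hsmooth := lieDerivIter_contDiff hZ hΓ
  -- derivative of the iterated Lie derivatives along the flow
  have hfderiv : ∀ k : ℕ, k < p → ∀ t ∈ Set.Icc (0 : ℝ) T,
      HasDerivAt (fun s => lieDerivIter Z Γ k (𝓏 s)) (lieDerivIter Z Γ (k+1) (𝓏 t)) t := by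
    intro k hk t ht
    have hg := hsmooth k hk.le
    have hd : DifferentiableAt ℝ (lieDerivIter Z Γ k) (𝓏 t) :=
      (hg.differentiable (by exact_mod_cast (by omega : p - k ≠ 0))).differentiableAt
    have := hd.hasFDerivAt.comp_hasDerivAt t (h𝓏deriv t ht)
    simpa [lieDerivIter, lieDeriv, Function.comp_def] using this
  set e : Fin p → ℝ → ℝ := fun i t => lieDerivIter Z Γ i (𝓏 t) - y t i with he
  have he0 : ∀ i, e i 0 = 0 := by
    intro i; simp [he, h𝓏0, hy0 i]
  have hederiv : ∀ t ∈ Set.Icc (0 : ℝ) T, ∀ i : Fin p,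
      HasDerivAt (e i)
        (if h : (i : ℕ) + 1 < p then e ⟨(i : ℕ) + 1, h⟩ t
         else lieDerivIter Z Γ p (𝓏 t) - ∑ j : Fin p, χ j * y t j) t := by
    intro t ht i
    have h1 := hfderiv i i.isLt t ht
    have h2 := hyderiv t ht i
    by_cases h : (i : ℕ) + 1 < p
    · rw [dif_pos h] at h2 ⊢
      exact h1.sub h2
    · rw [dif_neg h] at h2 ⊢
      have hip : (i : ℕ) + 1 = p := by have := i.isLt; omega
      rw [hip] at h1
      exact h1.sub h2
  set K : ℝ := 2 + ∑ j : Fin p, |χ j| with hK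
  -- Main positivity claim
  have key : ∀ ε : ℝ, 0 < ε → ∀ t ∈ Set.Icc (0 : ℝ) T, ∀ i : Fin p,
      0 < e i t + ε * Real.exp (K * t) := by
    intro ε hε
    by_contra hcon
    push_neg at hcon
    obtain ⟨t₁, ht₁, i₁, hi₁⟩ := hcon
    set g : Fin p → ℝ → ℝ := fun i t => e i t + ε * Real.exp (K * t) with hg
    -- continuity
    have c2 : Continuous fun t : ℝ => ε * Real.exp (K * t) := by continuity
    have hcont : ∀ i : Fin p, ∀ t ∈ Set.Icc (0 : ℝ) T, ContinuousAt (g i) t := by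
      intro i t ht
      exact ((hederiv t ht i).continuousAt).add c2.continuousAt
    set S : Set ℝ := {t | t ∈ Set.Icc (0 : ℝ) T ∧ ∃ i : Fin p, g i t ≤ 0} with hS
    have hSne : S.Nonempty := ⟨t₁, ht₁, i₁, hi₁⟩
    have hSbdd : BddBelow S := ⟨0, fun t ht => ht.1.1⟩
    have hScl : IsClosed S := by
      have : S = ⋃ i : Fin p, (Set.Icc (0 : ℝ) T ∩ (g i) ⁻¹' Set.Iic 0) := by
        ext t
        simp only [hS, Set.mem_setOf_eq, Set.mem_iUnion, Set.mem_inter_iff, Set.mem_preimage,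
          Set.mem_Iic]
        tauto
      rw [this]
      refine isClosed_iUnion_of_finite fun i => ?_
      refine ContinuousOn.preimage_isClosed_of_isClosed ?_ isClosed_Icc isClosed_Iic
      exact fun t ht => (hcont i t ht).continuousWithinAt
    set τ : ℝ := sInf S with hτ
    have hτS : τ ∈ S := hScl.csInf_mem hSne hSbdd
    have hτIcc : τ ∈ Set.Icc (0 : ℝ) T := hτS.1
    have hτpos : 0 < τ := by
      rcases lt_or_eq_of_le hτIcc.1 with h | h
      · exact h
      · exfalso
        obtain ⟨i, hi⟩ := hτS.2
        rw [← h] at hi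
        have : g i 0 = ε := by simp [hg, he0 i]
        rw [this] at hi; linarith
    have hbefore : ∀ t, t ∈ Set.Ico (0 : ℝ) τ → ∀ i : Fin p, 0 < g i t := by
      intro t ht i
      by_contra hle
      push_neg at hle
      have htS : t ∈ S := ⟨⟨ht.1, le_trans ht.2.le hτIcc.2⟩, i, hle⟩
      have hle' : τ ≤ t := csInf_le hSbdd htS
      linarith [ht.2]
    -- all components nonneg at τ
    have hτnonneg : ∀ i : Fin p, 0 ≤ g i τ := by
      intro i
      have htend : Filter.Tendsto (g i) (nhdsWithin τ (Set.Iio τ)) (nhds (g i τ)) :=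
        ((hcont i τ hτIcc).tendsto).mono_left nhdsWithin_le_nhds
      refine ge_of_tendsto htend ?_
      filter_upwards [Ioo_mem_nhdsLT_of_mem (Set.mem_Ioc.mpr ⟨hτpos, le_refl τ⟩)] with t ht
      exact (hbefore t ⟨ht.1.le, ht.2⟩ i).le
    obtain ⟨i₀, hi₀⟩ := hτS.2
    have hgτ : g i₀ τ = 0 := le_antisymm hi₀ (hτnonneg i₀)
    -- derivative of g i₀ at τ
    have hexp : HasDerivAt (fun t : ℝ => ε * Real.exp (K * t)) (ε * (Real.exp (K * τ) * K)) τ := by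
      have h1 : HasDerivAt (fun t : ℝ => K * t) K τ := by
        simpa using (hasDerivAt_id τ).const_mul K
      exact (h1.exp).const_mul ε
    set D : ℝ := (if h : (i₀ : ℕ) + 1 < p then e ⟨(i₀ : ℕ) + 1, h⟩ τ
         else lieDerivIter Z Γ p (𝓏 τ) - ∑ j : Fin p, χ j * y τ j) + ε * (Real.exp (K * τ) * K)
      with hD
    have hgderiv : HasDerivAt (g i₀) D τ := (hederiv τ hτIcc i₀).add hexp
    -- D ≤ 0 from the left-minimum
    have hDle : D ≤ 0 := by
      have hslope := hasDerivAt_iff_tendsto_slope.mp hgderiv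
      have hmono : nhdsWithin τ (Set.Iio τ) ≤ nhdsWithin τ {τ}ᶜ :=
        nhdsWithin_mono τ (fun x hx => ne_of_lt hx)
      refine le_of_tendsto (hslope.mono_left hmono) ?_
      filter_upwards [Ioo_mem_nhdsLT_of_mem (Set.mem_Ioc.mpr ⟨hτpos, le_refl τ⟩)] with t ht
      have hnum : 0 ≤ g i₀ t := (hbefore t ⟨ht.1.le, ht.2⟩ i₀).le
      rw [slope_def_field, hgτ, sub_zero]
      exact div_nonpos_of_nonneg_of_nonpos hnum (by linarith [ht.2])
    -- but D > 0 : contradiction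
    have hexppos : 0 < Real.exp (K * τ) := Real.exp_pos _
    have hKge2 : 2 ≤ K := by
      have : 0 ≤ ∑ j : Fin p, |χ j| := Finset.sum_nonneg fun j _ => abs_nonneg _
      linarith
    have hDpos : 0 < D := by
      rw [hD]
      by_cases h : (i₀ : ℕ) + 1 < p
      · rw [dif_pos h]
        have h1 : 0 ≤ g ⟨(i₀ : ℕ) + 1, h⟩ τ := hτnonneg _
        have h2 : e ⟨(i₀ : ℕ) + 1, h⟩ τ = g ⟨(i₀ : ℕ) + 1, h⟩ τ - ε * Real.exp (K * τ) := by
          simp [hg]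
        have h3 : ε * (Real.exp (K * τ) * 2) ≤ ε * (Real.exp (K * τ) * K) :=
          mul_le_mul_of_nonneg_left (mul_le_mul_of_nonneg_left hKge2 hexppos.le) hε.le
        rw [h2]
        nlinarith
      · rw [dif_neg h]
        have hM := hineq (𝓏 τ) (h𝓏M τ hτIcc)
        have hsum : ∑ j : Fin p, χ j * lieDerivIter Z Γ j (𝓏 τ) - ∑ j : Fin p, χ j * y τ j
            = ∑ j : Fin p, χ j * e j τ := by
          rw [← Finset.sum_sub_distrib]
          exact Finset.sum_congr rfl fun j _ => by rw [he]; ring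
        have hge : ∑ j : Fin p, χ j * e j τ
            = (∑ j : Fin p, χ j * g j τ) - (∑ j : Fin p, χ j) * (ε * Real.exp (K * τ)) := by
          rw [Finset.sum_mul, ← Finset.sum_sub_distrib]
          refine Finset.sum_congr rfl fun j _ => ?_
          have hgj : g j τ = e j τ + ε * Real.exp (K * τ) := rfl
          rw [hgj]; ring
        have hsumg : 0 ≤ ∑ j : Fin p, χ j * g j τ := by
          refine Finset.sum_nonneg fun j _ => ?_
          by_cases hj : (j : ℕ) + 1 < p
          · exact mul_nonneg (hχ j hj) (hτnonneg j)
          · have : j = i₀ := by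
              have h1 := j.isLt; have h2 := i₀.isLt
              apply Fin.ext; omega
            rw [this, hgτ, mul_zero]
        have hχsum : ∑ j : Fin p, χ j ≤ K - 2 := by
          rw [hK]
          have : ∑ j : Fin p, χ j ≤ ∑ j : Fin p, |χ j| :=
            Finset.sum_le_sum fun j _ => le_abs_self _
          linarith
        have hlow : lieDerivIter Z Γ p (𝓏 τ) - ∑ j : Fin p, χ j * y τ j
            ≥ (∑ j : Fin p, χ j * g j τ) - (∑ j : Fin p, χ j) * (ε * Real.exp (K * τ)) := by
          rw [← hge, ← hsum]; linarith
        have h4 : (∑ j : Fin p, χ j) * (ε * Real.exp (K * τ))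
            ≤ (K - 2) * (ε * Real.exp (K * τ)) :=
          mul_le_mul_of_nonneg_right hχsum (by positivity)
        have h5 : ε * (Real.exp (K * τ) * K)
            = (K - 2) * (ε * Real.exp (K * τ)) + 2 * (ε * Real.exp (K * τ)) := by ring
        have h6 : 0 < ε * Real.exp (K * τ) := by positivity
        linarith
    linarith
  -- conclude
  intro t ht
  have hexppos : 0 < Real.exp (K * t) := Real.exp_pos _
  have h0 : 0 ≤ e ⟨0, hp⟩ t := by
    by_contra hneg
    push_neg at hneg
    have hεpos : 0 < (-(e ⟨0, hp⟩ t)) / (2 * Real.exp (K * t)) :=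
      div_pos (by linarith) (by positivity)
    have hkey := key _ hεpos t ht ⟨0, hp⟩
    have heq : (-(e ⟨0, hp⟩ t) / (2 * Real.exp (K * t))) * Real.exp (K * t)
        = -(e ⟨0, hp⟩ t) / 2 := by
      field_simp
    rw [heq] at hkey
    have hhalf : e ⟨0, hp⟩ t + -e ⟨0, hp⟩ t / 2 = e ⟨0, hp⟩ t / 2 := by ring
    rw [hhalf] at hkey
    simp only [he] at hneg hkey
    linarith
  have heΓ : e ⟨0, hp⟩ t = Γ (𝓏 t) - y t ⟨0, hp⟩ := by
    simp [he, lieDerivIter]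
  rw [heΓ] at h0
  linarith
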